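/- Let a, b ∈ ℂ with |a|² − |b|² = 1, and suppose that φ_{a,b} maps the open upper half circle S¹₊ := {z ∈ ℂ : |z| = 1, Im z > 0} onto itself. Then there exists s ∈ ℝ such that φ_{a,b}(z) = ((e^s + 1)·z + (e^s − 1))/((e^s − 1)·z + (e^s + 1)) for all z ∈ ℂ with |z| = 1. -/

import Mathlib

open Complex Filter Set

/-- The Möbius transformation of the circle associated to `a b : ℂ`
with `|a|² - |b|² = 1`. -/
noncomputable def mobiusMap (a b z : ℂ) : ℂ :=
  (a * z + b) / ((starRingEnd ℂ) b * z + (starRingEnd ℂ) a)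

lemma mobius_den_ne (a b : ℂ)
    (hab : ‖a‖ ^ 2 - ‖b‖ ^ 2 = 1) :
    ∀ z : ℂ, ‖z‖ = 1 → (starRingEnd ℂ) b * z + (starRingEnd ℂ) a ≠ 0 := by
  intro z hz h0
  have h1 : (starRingEnd ℂ) a = -((starRingEnd ℂ) b * z) := by linear_combination h0
  have h2 : ‖a‖ = ‖b‖ := by
    have := congrArg norm h1
    simpa [norm_mul, hz, Complex.norm_conj] using this
  rw [h2] at hab
  norm_num at hab

lemma circle_mul_conj {z : ℂ} (hz : ‖z‖ = 1) : z * (starRingEnd ℂ) z = 1 := by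
  rw [Complex.mul_conj]
  norm_cast
  rw [← Complex.sq_norm, hz, one_pow]

lemma mobius_abs (a b : ℂ)
    (hab : ‖a‖ ^ 2 - ‖b‖ ^ 2 = 1) :
    ∀ z : ℂ, ‖z‖ = 1 → ‖mobiusMap a b z‖ = 1 := by
  intro z hz
  have hzz := circle_mul_conj hz
  have hkey : (starRingEnd ℂ) b * z + (starRingEnd ℂ) a
      = (starRingEnd ℂ) ((starRingEnd ℂ) z * (a * z + b)) := by
    simp only [map_mul, map_add, Complex.conj_conj]
    linear_combination (-((starRingEnd ℂ) a)) * hzz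
  have hD := mobius_den_ne a b hab z hz
  have hN : a * z + b ≠ 0 := by
    intro h
    apply hD
    rw [hkey, h, mul_zero, map_zero]
  unfold mobiusMap
  rw [norm_div, hkey, Complex.norm_conj, norm_mul, Complex.norm_conj, hz, one_mul,
    div_self (by simpa using hN)]

lemma mobius_im (a b : ℂ)
    (hab : ‖a‖ ^ 2 - ‖b‖ ^ 2 = 1) :
    ∀ z : ℂ, ‖z‖ = 1 →
      (mobiusMap a b z).im
        = (a ^ 2 * z + b ^ 2 * (starRingEnd ℂ) z + 2 * a * b).im
          / Complex.normSq ((starRingEnd ℂ) b * z + (starRingEnd ℂ) a) := by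
  intro z hz
  have hzz := circle_mul_conj hz
  set N := a * z + b with hNdef
  set D := (starRingEnd ℂ) b * z + (starRingEnd ℂ) a with hDdef
  have hprod : a ^ 2 * z + b ^ 2 * (starRingEnd ℂ) z + 2 * a * b
      = N * (starRingEnd ℂ) D := by
    rw [hNdef, hDdef]
    simp only [map_add, map_mul, Complex.conj_conj]
    linear_combination (-(a * b)) * hzz
  rw [hprod]
  unfold mobiusMap
  rw [← hNdef, ← hDdef, Complex.div_im, Complex.mul_im]
  simp only [Complex.conj_re, Complex.conj_im]
  ring

lemma mobius_inj (a b : ℂ)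
    (hab : ‖a‖ ^ 2 - ‖b‖ ^ 2 = 1) :
    ∀ z w : ℂ, ‖z‖ = 1 → ‖w‖ = 1 →
      mobiusMap a b z = mobiusMap a b w → z = w := by
  have hnsq : Complex.normSq a - Complex.normSq b = 1 := by
    rw [← Complex.sq_norm, ← Complex.sq_norm]; exact hab
  have hC : a * (starRingEnd ℂ) a - b * (starRingEnd ℂ) b = 1 := by
    rw [Complex.mul_conj, Complex.mul_conj]
    exact_mod_cast hnsq
  intro z w hz hw h
  unfold mobiusMap at h
  rw [div_eq_div_iff (mobius_den_ne a b hab z hz) (mobius_den_ne a b hab w hw)] at h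
  linear_combination h - (z - w) * hC

lemma mobius_g_eval (a b z : ℂ) :
    (a ^ 2 * z + b ^ 2 * (starRingEnd ℂ) z + 2 * a * b).im
      = (a ^ 2 + b ^ 2).im * z.re + (a ^ 2 - b ^ 2).re * z.im + 2 * (a * b).im := by
  simp only [Complex.add_im, Complex.mul_im, Complex.mul_re,
    Complex.add_re, Complex.sub_re, Complex.sub_im, Complex.conj_re, Complex.conj_im,
    Complex.re_ofNat, Complex.im_ofNat]
  ring

lemma mobius_upper (a b : ℂ)
    (hab : ‖a‖ ^ 2 - ‖b‖ ^ 2 = 1)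
    (hpres : mobiusMap a b '' {z : ℂ | ‖z‖ = 1 ∧ 0 < z.im} =
      {z : ℂ | ‖z‖ = 1 ∧ 0 < z.im}) :
    ∀ t : ℝ, t ∈ Ioo 0 Real.pi →
      0 < (a ^ 2 + b ^ 2).im * Real.cos t + (a ^ 2 - b ^ 2).re * Real.sin t
          + 2 * (a * b).im := by
  intro t ht
  set z : ℂ := Complex.exp (t * Complex.I) with hzdef
  have hz : ‖z‖ = 1 := Complex.norm_exp_ofReal_mul_I t
  have hzim : 0 < z.im := by
    rw [hzdef, Complex.exp_ofReal_mul_I_im]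
    exact Real.sin_pos_of_pos_of_lt_pi ht.1 ht.2
  have hmem : mobiusMap a b z ∈ {w : ℂ | ‖w‖ = 1 ∧ 0 < w.im} := by
    rw [← hpres]
    exact Set.mem_image_of_mem _ ⟨hz, hzim⟩
  have h1 : 0 < (mobiusMap a b z).im := hmem.2
  rw [mobius_im a b hab z hz] at h1
  have hq : 0 < Complex.normSq ((starRingEnd ℂ) b * z + (starRingEnd ℂ) a) :=
    Complex.normSq_pos.mpr (mobius_den_ne a b hab z hz)
  have h2 : 0 < (a ^ 2 * z + b ^ 2 * (starRingEnd ℂ) z + 2 * a * b).im := by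
    have h3 := mul_pos h1 hq
    rwa [div_mul_cancel₀ _ (ne_of_gt hq)] at h3
  rw [mobius_g_eval, hzdef, Complex.exp_ofReal_mul_I_re, Complex.exp_ofReal_mul_I_im] at h2
  exact h2

lemma mobius_endpoint (a b : ℂ)
    (hab : ‖a‖ ^ 2 - ‖b‖ ^ 2 = 1)
    (hpres : mobiusMap a b '' {z : ℂ | ‖z‖ = 1 ∧ 0 < z.im} =
      {z : ℂ | ‖z‖ = 1 ∧ 0 < z.im}) :
    ∀ z : ℂ, ‖z‖ = 1 → z.im = 0 →
      (a ^ 2 + b ^ 2).im * z.re + (a ^ 2 - b ^ 2).re * z.im + 2 * (a * b).im ≤ 0 := by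
  intro z hz hzim
  have him : (mobiusMap a b z).im ≤ 0 := by
    by_contra h
    push_neg at h
    have hmem : mobiusMap a b z ∈ {w : ℂ | ‖w‖ = 1 ∧ 0 < w.im} :=
      ⟨mobius_abs a b hab z hz, h⟩
    rw [← hpres] at hmem
    obtain ⟨w, ⟨hw, hwim⟩, hweq⟩ := hmem
    have := mobius_inj a b hab w z hw hz hweq
    rw [this] at hwim
    rw [hzim] at hwim
    exact lt_irrefl 0 hwim
  rw [mobius_im a b hab z hz] at him
  have hq : 0 < Complex.normSq ((starRingEnd ℂ) b * z + (starRingEnd ℂ) a) :=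
    Complex.normSq_pos.mpr (mobius_den_ne a b hab z hz)
  rw [← mobius_g_eval]
  by_contra hc
  push_neg at hc
  have := div_pos hc hq
  linarith

lemma mobius_PQR (a b : ℂ)
    (hab : ‖a‖ ^ 2 - ‖b‖ ^ 2 = 1)
    (hpres : mobiusMap a b '' {z : ℂ | ‖z‖ = 1 ∧ 0 < z.im} =
      {z : ℂ | ‖z‖ = 1 ∧ 0 < z.im}) :
    (a ^ 2 + b ^ 2).im = 0 ∧ (a * b).im = 0 ∧ 0 < (a ^ 2 - b ^ 2).re := by
  set P : ℝ := (a ^ 2 + b ^ 2).im with hPdef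
  set Q : ℝ := (a ^ 2 - b ^ 2).re with hQdef
  set R : ℝ := 2 * (a * b).im with hRdef
  have hup : ∀ t : ℝ, t ∈ Ioo 0 Real.pi →
      0 < P * Real.cos t + Q * Real.sin t + R := mobius_upper a b hab hpres
  have hend1 : P + R ≤ 0 := by
    have h := mobius_endpoint a b hab hpres 1 (by simp) (by simp)
    simp only [Complex.one_re, Complex.one_im] at h
    linarith
  have hend2 : -P + R ≤ 0 := by
    have h := mobius_endpoint a b hab hpres (-1) (by simp) (by simp)
    simp only [Complex.neg_re, Complex.neg_im, Complex.one_re, Complex.one_im] at h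
    linarith
  have hcont : Continuous fun t : ℝ => P * Real.cos t + Q * Real.sin t + R :=
    ((continuous_const.mul Real.continuous_cos).add
      (continuous_const.mul Real.continuous_sin)).add continuous_const
  have hlim1 : 0 ≤ P + R := by
    have ht : Tendsto (fun t : ℝ => P * Real.cos t + Q * Real.sin t + R)
        (nhdsWithin 0 (Ioi 0)) (nhds (P + R)) := by
      have h0 : Tendsto (fun t : ℝ => P * Real.cos t + Q * Real.sin t + R)
          (nhdsWithin 0 (Ioi 0)) (nhds (P * Real.cos 0 + Q * Real.sin 0 + R)) :=
        (hcont.tendsto 0).mono_left nhdsWithin_le_nhds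
      simpa using h0
    refine ge_of_tendsto ht ?_
    filter_upwards [Ioo_mem_nhdsGT_of_mem (Set.mem_Ico.mpr ⟨le_refl 0, Real.pi_pos⟩)]
      with t ht'
    exact (hup t ht').le
  have hlim2 : 0 ≤ -P + R := by
    have ht : Tendsto (fun t : ℝ => P * Real.cos t + Q * Real.sin t + R)
        (nhdsWithin Real.pi (Iio Real.pi)) (nhds (-P + R)) := by
      have h0 : Tendsto (fun t : ℝ => P * Real.cos t + Q * Real.sin t + R)
          (nhdsWithin Real.pi (Iio Real.pi))
          (nhds (P * Real.cos Real.pi + Q * Real.sin Real.pi + R)) :=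
        (hcont.tendsto Real.pi).mono_left nhdsWithin_le_nhds
      simpa using h0
    refine ge_of_tendsto ht ?_
    filter_upwards [Ioo_mem_nhdsLT_of_mem (Set.mem_Ioc.mpr ⟨Real.pi_pos, le_refl _⟩)]
      with t ht'
    exact (hup t ht').le
  have hP0 : P = 0 := by linarith
  have hR0 : R = 0 := by linarith
  have hQpos : 0 < Q := by
    have h := hup (Real.pi / 2) ⟨by positivity, by linarith [Real.pi_pos]⟩
    rw [Real.cos_pi_div_two, Real.sin_pi_div_two] at h
    rw [hP0, hR0] at h
    linarith
  exact ⟨hP0, by linarith, hQpos⟩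

lemma mobius_aux_real (a b : ℂ)
    (hab : ‖a‖ ^ 2 - ‖b‖ ^ 2 = 1)
    (hpres : mobiusMap a b '' {z : ℂ | ‖z‖ = 1 ∧ 0 < z.im} =
      {z : ℂ | ‖z‖ = 1 ∧ 0 < z.im}) :
    a.im = 0 ∧ b.im = 0 := by
  obtain ⟨hP0, hR0, hQpos⟩ := mobius_PQR a b hab hpres
  have e1 : a.re * a.im + b.re * b.im = 0 := by
    simp only [Complex.add_im, Complex.mul_im, pow_two] at hP0
    linarith
  have e2 : a.re * b.im + a.im * b.re = 0 := by
    simp only [Complex.mul_im] at hR0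
    linarith
  have e3 : 0 < a.re ^ 2 - a.im ^ 2 - b.re ^ 2 + b.im ^ 2 := by
    simp only [Complex.sub_re, Complex.mul_re, pow_two] at hQpos
    nlinarith [hQpos]
  have e4 : a.re ^ 2 + a.im ^ 2 - b.re ^ 2 - b.im ^ 2 = 1 := by
    have hnsq : Complex.normSq a - Complex.normSq b = 1 := by
      rw [← Complex.sq_norm, ← Complex.sq_norm]; exact hab
    simp only [Complex.normSq_apply] at hnsq
    nlinarith [hnsq]
  have haim : a.im = 0 := by
    by_contra h
    have ha2sq : 0 < a.im ^ 2 := by positivity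
    have h1 : a.re * (a.im ^ 2 - b.im ^ 2) = 0 := by
      linear_combination a.im * e1 - b.im * e2
    rcases mul_eq_zero.mp h1 with h2 | h2
    · have hbre : b.re = 0 := by
        have : a.im * b.re = 0 := by linear_combination e2 - b.im * h2
        rcases mul_eq_zero.mp this with h3 | h3
        · exact absurd h3 h
        · exact h3
      rw [h2, hbre] at e3 e4
      nlinarith
    · have hb2 : b.im ^ 2 = a.im ^ 2 := by linarith
      have hsq : a.re ^ 2 * b.im ^ 2 = a.im ^ 2 * b.re ^ 2 := by
        linear_combination (a.re * b.im - a.im * b.re) * e2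
      rw [hb2] at hsq
      have hre : a.re ^ 2 = b.re ^ 2 :=
        mul_right_cancel₀ (ne_of_gt ha2sq)
          (by linarith : a.re ^ 2 * a.im ^ 2 = b.re ^ 2 * a.im ^ 2)
      nlinarith
  have hbim : b.im = 0 := by
    have hare : a.re ≠ 0 := by
      intro h
      rw [h, haim] at e4
      nlinarith [sq_nonneg b.re, sq_nonneg b.im]
    have : a.re * b.im = 0 := by
      rw [haim] at e2
      linarith
    rcases mul_eq_zero.mp this with h | h
    · exact absurd h hare
    · exact h
  exact ⟨haim, hbim⟩

/-- A Möbius transformation of the circle mapping the open upper half circle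
onto itself is a dilation `δ_s` for some `s ∈ ℝ`. -/
theorem mobius_preserving_upper_halfcircle_is_dilation (a b : ℂ)
    (hab : ‖a‖ ^ 2 - ‖b‖ ^ 2 = 1)
    (hpres : mobiusMap a b '' {z : ℂ | ‖z‖ = 1 ∧ 0 < z.im} =
      {z : ℂ | ‖z‖ = 1 ∧ 0 < z.im}) :
    ∃ s : ℝ, ∀ z : ℂ, ‖z‖ = 1 →
      mobiusMap a b z = (((Real.exp s : ℂ) + 1) * z + ((Real.exp s : ℂ) - 1)) /
        (((Real.exp s : ℂ) - 1) * z + ((Real.exp s : ℂ) + 1)) := by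
  obtain ⟨haim, hbim⟩ := mobius_aux_real a b hab hpres
  have hnsq : Complex.normSq a - Complex.normSq b = 1 := by
    rw [← Complex.sq_norm, ← Complex.sq_norm]; exact hab
  have hab2 : a.re ^ 2 - b.re ^ 2 = 1 := by
    simp only [Complex.normSq_apply] at hnsq
    rw [haim, hbim] at hnsq
    nlinarith [hnsq]
  have hsumne : a.re + b.re ≠ 0 := by
    intro h
    have : a.re = -b.re := by linarith
    rw [this] at hab2
    nlinarith
  refine ⟨Real.log ((a.re + b.re) ^ 2), ?_⟩
  intro z hz
  have hexp : Real.exp (Real.log ((a.re + b.re) ^ 2)) = (a.re + b.re) ^ 2 :=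
    Real.exp_log (by positivity)
  have ha : a = (a.re : ℂ) := by
    apply Complex.ext <;> simp [haim]
  have hb : b = (b.re : ℂ) := by
    apply Complex.ext <;> simp [hbim]
  have hD := mobius_den_ne a b hab z hz
  rw [ha, hb] at hD
  rw [Complex.conj_ofReal, Complex.conj_ofReal] at hD
  unfold mobiusMap
  rw [ha, hb, Complex.conj_ofReal, Complex.conj_ofReal]
  simp only [Complex.ofReal_re]
  have hE : (Real.exp (Real.log ((a.re + b.re) ^ 2)) : ℂ) = ((a.re : ℂ) + b.re) ^ 2 := by
    rw [hexp]; push_cast; ring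
  rw [hE]
  have habc : (a.re : ℂ) ^ 2 - (b.re : ℂ) ^ 2 = 1 := by exact_mod_cast hab2
  have hD2 : (((a.re : ℂ) + b.re) ^ 2 - 1) * z + (((a.re : ℂ) + b.re) ^ 2 + 1) ≠ 0 := by
    have hfac : (((a.re : ℂ) + b.re) ^ 2 - 1) * z + (((a.re : ℂ) + b.re) ^ 2 + 1)
        = (2 * ((a.re : ℂ) + b.re)) * ((b.re : ℂ) * z + a.re) := by
      linear_combination (z - 1) * habc
    rw [hfac]
    apply mul_ne_zero
    · simp only [ne_eq, mul_eq_zero]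
      push_neg
      constructor
      · norm_num
      · exact_mod_cast hsumne
    · exact hD
  rw [div_eq_div_iff hD hD2]
  linear_combination ((a.re : ℂ) + b.re) * (z ^ 2 - 1) * habc
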